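/- Let Y be an n×n matrix over a field and let s, t, k be integers with s ≥ 2, t ≥ 2, k ≥ 1 and s+t+k ≤ n. Then det Y^{[n−t,n]}_{[s−1,s+t−2]∪{s+t+k}} · det Y^{[n−t+1,n]}_{[s−1,s+t−3]∪{s+t−1+k}} = det Y^{[n−t,n]}_{[s−1,s+t−3]∪[s+t−1+k,s+t+k]} · det Y^{[n−t+1,n]}_{[s−1,s+t−2]} + det Y^{[n−t,n]}_{[s−1,s+t−2]∪{s+t+k−1}} · det Y^{[n−t+1,n]}_{[s−1,s+t−3]∪{s+t+k}}. -/
import Mathlib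


/-- The entry of a matrix at the 1-based position `(a, b)`; equals `0` out of range. -/
def ent {F : Type*} [Zero F] {r c : ℕ} (A : Matrix (Fin r) (Fin c) F) (a b : ℕ) : F :=
  if h : a - 1 < r ∧ b - 1 < c then A ⟨a - 1, h.1⟩ ⟨b - 1, h.2⟩ else 0

/-- The determinant of the `p × p` submatrix of `A` whose rows are the (1-based) rows
`row 0, row 1, …, row (p-1)` of `A` and whose columns are `col 0, …, col (p-1)`. -/
noncomputable def subdet {F : Type*} [Field F] {r c : ℕ} (A : Matrix (Fin r) (Fin c) F)
    (p : ℕ) (row col : ℕ → ℕ) : F :=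
  (Matrix.of fun a b : Fin p => ent A (row a.val) (col b.val)).det

/-- Replacing row `i` of a fixed matrix `W`, then taking the determinant, is linear. -/
noncomputable def rowDetLM {F : Type*} [Field F] {p : ℕ} (W : Matrix (Fin p) (Fin p) F)
    (i : Fin p) : (Fin p → F) →ₗ[F] F where
  toFun x := (W.updateRow i x).det
  map_add' u w := Matrix.det_updateRow_add W i u w
  map_smul' c u := by simp [Matrix.det_updateRow_smul]

/-- Cofactor expansion of a singular determinant: for `N+1` vectors in `F^N` and any
linear functional `φ`, the alternating sum of `φ(vᵢ) · det(v with row i deleted)` vanishes. -/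
theorem plucker_aux {F : Type*} [Field F] {N : ℕ} (v : Fin (N + 1) → Fin N → F)
    (φ : (Fin N → F) →ₗ[F] F) :
    ∑ i : Fin (N + 1), (-1 : F) ^ (i : ℕ) * φ (v i) *
      (Matrix.of fun a b : Fin N => v (i.succAbove a) b).det = 0 := by
  classical
  set M : Matrix (Fin (N + 1)) (Fin (N + 1)) F :=
    Matrix.of fun i => Fin.cons (φ (v i)) (v i) with hMdef
  have hM : M.det = 0 := by
    set c : Fin (N + 1) → F :=
      Fin.cons 0 (fun j => φ (fun j' => if j = j' then 1 else 0)) with hcdef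
    have h1 : M.updateCol 0 (fun r => ∑ i, c i • M r i) = M := by
      ext r l
      rcases eq_or_ne l 0 with rfl | hl
      · rw [Matrix.updateCol_apply, if_pos rfl]
        have hM0 : M r 0 = φ (v r) := by simp [hMdef]
        rw [hM0, Fin.sum_univ_succ]
        simp only [hcdef, Fin.cons_zero, Fin.cons_succ, zero_smul, zero_add]
        have hMr : ∀ j : Fin N, M r j.succ = v r j := by
          intro j; simp [hMdef]
        rw [LinearMap.pi_apply_eq_sum_univ φ (v r)]
        refine (Finset.sum_congr rfl fun j _ => ?_).symm
        rw [hMr j, smul_eq_mul, smul_eq_mul, mul_comm]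
      · rw [Matrix.updateCol_apply, if_neg hl]
    have h2 := Matrix.det_updateCol_sum M 0 c
    rw [h1] at h2
    have hc0 : c 0 = 0 := by simp [hcdef]
    rw [hc0, zero_smul] at h2
    exact h2
  rw [Matrix.det_succ_column_zero] at hM
  rw [← hM]
  refine Finset.sum_congr rfl fun i _ => ?_
  have hM0 : M i 0 = φ (v i) := by simp [hMdef]
  have hsub : (M.submatrix i.succAbove Fin.succ) =
      (Matrix.of fun a b : Fin N => v (i.succAbove a) b) := by
    ext a b
    simp [hMdef, Matrix.submatrix_apply]
  rw [hM0, hsub]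

/-- The 1-based row indices used in `statement9`, as a function of position. -/
def Rfun (s k m : ℕ) : ℕ → ℕ := fun u =>
  if u < m + 2 then s - 1 + u else if u = m + 2 then s + m + 1 + k else s + m + 2 + k

/-- The `m+4` row vectors (restricted to the last `m+3` columns) used in `statement9`. -/
def vv {F : Type*} [Field F] {n : ℕ} (Y : Matrix (Fin n) (Fin n) F) (s k m : ℕ) :
    Fin (m + 4) → Fin (m + 3) → F :=
  fun i j => ent Y (Rfun s k m i) (n - (m + 2) + j)

/-- The base matrix of the "small" determinants (final column block, without its first column). -/
def Wm {F : Type*} [Field F] {n : ℕ} (Y : Matrix (Fin n) (Fin n) F) (s k m : ℕ) :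
    Matrix (Fin (m + 2)) (Fin (m + 2)) F :=
  Matrix.of fun a b => vv Y s k m (Fin.castLE (by omega) a) b.succ

/-- The linear functional computing the "small" determinants. -/
noncomputable def phiLM {F : Type*} [Field F] {n : ℕ} (Y : Matrix (Fin n) (Fin n) F)
    (s k m : ℕ) : (Fin (m + 3) → F) →ₗ[F] F :=
  (rowDetLM (Wm Y s k m) (Fin.last (m + 1))).comp (LinearMap.funLeft F F Fin.succ)

/-- The "big" determinant with row `i` deleted. -/
noncomputable def Dm {F : Type*} [Field F] {n : ℕ} (Y : Matrix (Fin n) (Fin n) F)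
    (s k m : ℕ) (i : Fin (m + 4)) : F :=
  (Matrix.of fun a b : Fin (m + 3) => vv Y s k m (i.succAbove a) b).det

lemma phiLM_apply {F : Type*} [Field F] {n : ℕ} (Y : Matrix (Fin n) (Fin n) F)
    (s k m : ℕ) (x : Fin (m + 3) → F) :
    phiLM Y s k m x
      = ((Wm Y s k m).updateRow (Fin.last (m + 1)) (fun b => x b.succ)).det := rfl

lemma val_succAbove {q : ℕ} (p : Fin (q + 1)) (a : Fin q) :
    ((p.succAbove a : Fin (q + 1)) : ℕ)
      = if (a : ℕ) < (p : ℕ) then (a : ℕ) else (a : ℕ) + 1 := by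
  rcases lt_or_ge (a : ℕ) (p : ℕ) with hlt | hge
  · rw [Fin.succAbove, if_pos (by simpa [Fin.lt_def] using hlt), if_pos hlt]
    simp
  · rw [Fin.succAbove, if_neg (by simpa [Fin.lt_def] using Nat.not_lt.mpr hge),
      if_neg (Nat.not_lt.mpr hge)]
    rfl

lemma phiLM_vanish {F : Type*} [Field F] {n : ℕ} (Y : Matrix (Fin n) (Fin n) F)
    (s k m : ℕ) (x : Fin (m + 4)) (hx : (x : ℕ) < m + 1) :
    phiLM Y s k m (vv Y s k m x) = 0 := by
  rw [phiLM_apply]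
  have hb : (m + 2 : ℕ) ≤ m + 4 := by omega
  have hne : (⟨(x : ℕ), by omega⟩ : Fin (m + 2)) ≠ Fin.last (m + 1) := by
    intro hcontra
    have := congrArg Fin.val hcontra
    simp only [Fin.val_last] at this
    omega
  refine Matrix.det_zero_of_row_eq hne ?_
  rw [Matrix.updateRow_ne hne, Matrix.updateRow_self]
  funext b
  show vv Y s k m (Fin.castLE hb ⟨(x : ℕ), by omega⟩) b.succ = vv Y s k m x b.succ
  have hix : (Fin.castLE hb (⟨(x : ℕ), by omega⟩ : Fin (m + 2))) = x := Fin.ext rfl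
  rw [hix]

lemma three_term {F : Type*} [Field F] {n : ℕ} (Y : Matrix (Fin n) (Fin n) F) (s k m : ℕ) :
    phiLM Y s k m (vv Y s k m ⟨m + 2, by omega⟩) * Dm Y s k m ⟨m + 2, by omega⟩
      = phiLM Y s k m (vv Y s k m ⟨m + 1, by omega⟩) * Dm Y s k m ⟨m + 1, by omega⟩
        + phiLM Y s k m (vv Y s k m ⟨m + 3, by omega⟩) * Dm Y s k m ⟨m + 3, by omega⟩ := by
  classical
  set φ := phiLM Y s k m with hφdef
  set v := vv Y s k m with hvdef
  have key : ∑ i : Fin (m + 4), (-1 : F) ^ (i : ℕ) * φ (v i) *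
      (Matrix.of fun a b : Fin (m + 3) => v (i.succAbove a) b).det = 0 :=
    plucker_aux (N := m + 3) v φ
  set term : Fin (m + 4) → F := fun i => (-1 : F) ^ (i : ℕ) * φ (v i) *
      (Matrix.of fun a b : Fin (m + 3) => v (i.succAbove a) b).det with htermdef
  set i₁ : Fin (m + 4) := ⟨m + 1, by omega⟩ with hi₁
  set i₂ : Fin (m + 4) := ⟨m + 2, by omega⟩ with hi₂
  set i₃ : Fin (m + 4) := ⟨m + 3, by omega⟩ with hi₃
  have hne12 : i₁ ≠ i₂ := by rw [hi₁, hi₂]; intro hc; simpa using congrArg Fin.val hc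
  have hne13 : i₁ ≠ i₃ := by rw [hi₁, hi₃]; intro hc; simpa using congrArg Fin.val hc
  have hne23 : i₂ ≠ i₃ := by rw [hi₂, hi₃]; intro hc; simpa using congrArg Fin.val hc
  have hsum : ∑ i ∈ ({i₁, i₂, i₃} : Finset (Fin (m + 4))), term i = ∑ i, term i := by
    refine Finset.sum_subset (Finset.subset_univ _) ?_
    intro x _ hx
    simp only [Finset.mem_insert, Finset.mem_singleton] at hx
    push_neg at hx
    have hx1 : (x : ℕ) ≠ m + 1 := by
      intro hc; exact hx.1 (by rw [hi₁]; exact Fin.ext hc)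
    have hx2 : (x : ℕ) ≠ m + 2 := by
      intro hc; exact hx.2.1 (by rw [hi₂]; exact Fin.ext hc)
    have hx3 : (x : ℕ) ≠ m + 3 := by
      intro hc; exact hx.2.2 (by rw [hi₃]; exact Fin.ext hc)
    have hlt : (x : ℕ) < m + 1 := by have := x.isLt; omega
    have hz : φ (v x) = 0 := phiLM_vanish Y s k m x hlt
    rw [htermdef]
    simp only [hz, mul_zero, zero_mul]
  have hsum3 : term i₁ + (term i₂ + term i₃) = 0 := by
    rw [← Finset.sum_singleton (f := term) i₃, ← Finset.sum_insert (by simpa using hne23),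
      ← Finset.sum_insert (by simp [hne12, hne13]), hsum, key]
  have hval1 : (i₁ : ℕ) = m + 1 := by rw [hi₁]
  have hval2 : (i₂ : ℕ) = m + 2 := by rw [hi₂]
  have hval3 : (i₃ : ℕ) = m + 3 := by rw [hi₃]
  have hterm : ∀ i : Fin (m + 4), term i = (-1 : F) ^ (i : ℕ) * φ (v i) * Dm Y s k m i :=
    fun i => rfl
  have h3 : (-1 : F) ^ (m + 1) * φ (v i₁) * Dm Y s k m i₁
      + ((-1 : F) ^ (m + 2) * φ (v i₂) * Dm Y s k m i₂
        + (-1 : F) ^ (m + 3) * φ (v i₃) * Dm Y s k m i₃) = 0 := by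
    rw [hterm i₁, hterm i₂, hterm i₃, hval1, hval2, hval3] at hsum3
    exact hsum3
  have hc : ((-1 : F) ^ m) ≠ 0 := pow_ne_zero _ (by norm_num)
  show φ (v i₂) * Dm Y s k m i₂ = φ (v i₁) * Dm Y s k m i₁ + φ (v i₃) * Dm Y s k m i₃
  refine mul_left_cancel₀ hc ?_
  linear_combination h3

/-- Desnanot–Jacobi identity behind the mutation at `h_{s+k,n}^{(t-1)}` in the sequence
`V_{s,t}` (for `k > 0`):
`det Y^{[n−t,n]}_{[s−1,s+t−2]∪{s+t+k}} · det Y^{[n−t+1,n]}_{[s−1,s+t−3]∪{s+t−1+k}}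
 = det Y^{[n−t,n]}_{[s−1,s+t−3]∪[s+t−1+k,s+t+k]} · det Y^{[n−t+1,n]}_{[s−1,s+t−2]}
 + det Y^{[n−t,n]}_{[s−1,s+t−2]∪{s+t+k−1}} · det Y^{[n−t+1,n]}_{[s−1,s+t−3]∪{s+t+k}}`. -/
theorem statement9 {F : Type*} [Field F] {n : ℕ} (Y : Matrix (Fin n) (Fin n) F)
    (s t k : ℕ) (hs : 2 ≤ s) (ht : 2 ≤ t) (hk : 1 ≤ k) (h : s + t + k ≤ n) :
    subdet Y (t + 1) (fun u => if u < t then s - 1 + u else s + t + k) (fun u => n - t + u) *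
      subdet Y t (fun u => if u < t - 1 then s - 1 + u else s + t - 1 + k)
        (fun u => n - t + 1 + u)
    = subdet Y (t + 1) (fun u => if u < t - 1 then s - 1 + u else s + k + u)
          (fun u => n - t + u) *
        subdet Y t (fun u => s - 1 + u) (fun u => n - t + 1 + u)
      + subdet Y (t + 1) (fun u => if u < t then s - 1 + u else s + t + k - 1)
          (fun u => n - t + u) *
        subdet Y t (fun u => if u < t - 1 then s - 1 + u else s + t + k)
          (fun u => n - t + 1 + u) := by
  classical
  obtain ⟨m, rfl⟩ : ∃ m, t = m + 2 := ⟨t - 2, by omega⟩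
  have ebig : ∀ (i : Fin (m + 4)) (row : ℕ → ℕ),
      (∀ a : Fin (m + 3), row (a : ℕ) = Rfun s k m ((i.succAbove a : Fin (m + 4)) : ℕ)) →
      subdet Y (m + 2 + 1) row (fun u => n - (m + 2) + u) = Dm Y s k m i := by
    intro i row hrow
    unfold subdet Dm
    congr 1
    ext a b
    simp only [Matrix.of_apply]
    rw [hrow a]
    rfl
  have esmall : ∀ (i : Fin (m + 4)) (row : ℕ → ℕ),
      (∀ a : Fin (m + 2),
        row (a : ℕ) = (if (a : ℕ) = m + 1 then Rfun s k m (i : ℕ) else Rfun s k m (a : ℕ))) →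
      subdet Y (m + 2) row (fun u => n - (m + 2) + 1 + u) = phiLM Y s k m (vv Y s k m i) := by
    intro i row hrow
    rw [phiLM_apply]
    unfold subdet
    congr 1
    ext a b
    simp only [Matrix.of_apply, Matrix.updateRow_apply]
    rw [hrow a]
    by_cases ha : a = Fin.last (m + 1)
    · rw [if_pos ha, if_pos (by rw [ha]; rfl)]
      show ent Y (Rfun s k m (i : ℕ)) (n - (m + 2) + 1 + (b : ℕ))
        = ent Y (Rfun s k m (i : ℕ)) (n - (m + 2) + ((b.succ : Fin (m + 3)) : ℕ))
      rw [Fin.val_succ]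
      congr 1
      omega
    · rw [if_neg ha, if_neg (fun hc => ha (Fin.ext (by rw [hc]; rfl)))]
      show ent Y (Rfun s k m (a : ℕ)) (n - (m + 2) + 1 + (b : ℕ))
        = ent Y (Rfun s k m ((Fin.castLE (by omega) a : Fin (m + 4)) : ℕ))
            (n - (m + 2) + ((b.succ : Fin (m + 3)) : ℕ))
      rw [Fin.coe_castLE, Fin.val_succ]
      congr 1
      omega
  have E1 : subdet Y (m + 2 + 1) (fun u => if u < m + 2 then s - 1 + u else s + (m + 2) + k)
      (fun u => n - (m + 2) + u) = Dm Y s k m ⟨m + 2, by omega⟩ := by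
    refine ebig _ _ fun a => ?_
    rw [val_succAbove]
    show (if (a : ℕ) < m + 2 then s - 1 + (a : ℕ) else s + (m + 2) + k) = _
    unfold Rfun
    have := a.isLt
    simp only [Fin.val_mk]
    split_ifs <;> omega
  have E2 : subdet Y (m + 2) (fun u => if u < m + 2 - 1 then s - 1 + u else s + (m + 2) - 1 + k)
      (fun u => n - (m + 2) + 1 + u) = phiLM Y s k m (vv Y s k m ⟨m + 2, by omega⟩) := by
    refine esmall _ _ fun a => ?_
    show (if (a : ℕ) < m + 2 - 1 then s - 1 + (a : ℕ) else s + (m + 2) - 1 + k) = _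
    unfold Rfun
    have := a.isLt
    simp only [Fin.val_mk]
    split_ifs <;> omega
  have E3 : subdet Y (m + 2 + 1) (fun u => if u < m + 2 - 1 then s - 1 + u else s + k + u)
      (fun u => n - (m + 2) + u) = Dm Y s k m ⟨m + 1, by omega⟩ := by
    refine ebig _ _ fun a => ?_
    rw [val_succAbove]
    show (if (a : ℕ) < m + 2 - 1 then s - 1 + (a : ℕ) else s + k + (a : ℕ)) = _
    unfold Rfun
    have := a.isLt
    simp only [Fin.val_mk]
    split_ifs <;> omega
  have E4 : subdet Y (m + 2) (fun u => s - 1 + u) (fun u => n - (m + 2) + 1 + u)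
      = phiLM Y s k m (vv Y s k m ⟨m + 1, by omega⟩) := by
    refine esmall _ _ fun a => ?_
    show s - 1 + (a : ℕ) = _
    unfold Rfun
    have := a.isLt
    simp only [Fin.val_mk]
    split_ifs <;> omega
  have E5 : subdet Y (m + 2 + 1) (fun u => if u < m + 2 then s - 1 + u else s + (m + 2) + k - 1)
      (fun u => n - (m + 2) + u) = Dm Y s k m ⟨m + 3, by omega⟩ := by
    refine ebig _ _ fun a => ?_
    rw [val_succAbove]
    show (if (a : ℕ) < m + 2 then s - 1 + (a : ℕ) else s + (m + 2) + k - 1) = _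
    unfold Rfun
    have := a.isLt
    simp only [Fin.val_mk]
    split_ifs <;> omega
  have E6 : subdet Y (m + 2) (fun u => if u < m + 2 - 1 then s - 1 + u else s + (m + 2) + k)
      (fun u => n - (m + 2) + 1 + u) = phiLM Y s k m (vv Y s k m ⟨m + 3, by omega⟩) := by
    refine esmall _ _ fun a => ?_
    show (if (a : ℕ) < m + 2 - 1 then s - 1 + (a : ℕ) else s + (m + 2) + k) = _
    unfold Rfun
    have := a.isLt
    simp only [Fin.val_mk]
    split_ifs <;> omega
  rw [E1, E2, E3, E4, E5, E6]
  linear_combination three_term Y s k m
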